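/- Every matrix A ∈ SL(2,ℤ) with trace(A) = -3 is conjugate in SL(2,ℤ) to the matrix [[-2, -1], [-1, -1]]. -/

import Mathlib

open Matrix

abbrev SL2 := Matrix.SpecialLinearGroup (Fin 2) ℤ

lemma detM (a b c : ℤ) (h : b * c = -(a^2 + 3*a + 1)) :
    (!![a, b; c, -3 - a] : Matrix (Fin 2) (Fin 2) ℤ).det = 1 := by
  simp [Matrix.det_fin_two_of]; linear_combination -h

def M (a b c : ℤ) (h : b * c = -(a^2 + 3*a + 1)) : SL2 := ⟨!![a, b; c, -3 - a], detM a b c h⟩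

def Gsl : SL2 := ⟨!![-2,-1;-1,-1], by norm_num [Matrix.det_fin_two_of]⟩

def Conj (A : SL2) : Prop := ∃ P : SL2, P * A * P⁻¹ = Gsl

lemma conj_of_conj_mul (A Q : SL2) (h : Conj (Q * A * Q⁻¹)) : Conj A := by
  obtain ⟨P, hP⟩ := h
  exact ⟨P * Q, by rw [← hP]; group⟩

lemma conj_of_matrix (A P : SL2) (hP : P.val * A.val = Gsl.val * P.val) : Conj A :=
  ⟨P, by rw [mul_inv_eq_iff_eq_mul]; exact Subtype.ext (by simpa using hP)⟩

def Tn (n : ℤ) : SL2 := ⟨!![1, n; 0, 1], by norm_num [Matrix.det_fin_two_of]⟩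

def Ssl : SL2 := ⟨!![0, -1; 1, 0], by norm_num [Matrix.det_fin_two_of]⟩

lemma hT (n a b c : ℤ) (h : b * c = -(a^2 + 3*a + 1)) :
    (b + n*(-3-2*a) - n^2*c) * c = -((a + n*c)^2 + 3*(a + n*c) + 1) := by
  linear_combination h

lemma hS (a b c : ℤ) (h : b * c = -(a^2 + 3*a + 1)) :
    (-c) * (-b) = -((-3-a)^2 + 3*(-3-a) + 1) := by linear_combination h

lemma Tconj (n a b c : ℤ) (h : b * c = -(a^2 + 3*a + 1)) :
    Tn n * M a b c h * (Tn n)⁻¹ =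
      M (a + n*c) (b + n*(-3-2*a) - n^2*c) c (hT n a b c h) := by
  rw [mul_inv_eq_iff_eq_mul]
  ext i j
  rw [Matrix.SpecialLinearGroup.coe_mul, Matrix.SpecialLinearGroup.coe_mul]
  simp only [Tn, M]
  fin_cases i <;> fin_cases j <;>
    simp [Matrix.mul_apply, Fin.sum_univ_succ] <;> ring

lemma Sconj (a b c : ℤ) (h : b * c = -(a^2 + 3*a + 1)) :
    Ssl * M a b c h * Ssl⁻¹ = M (-3-a) (-c) (-b) (hS a b c h) := by
  rw [mul_inv_eq_iff_eq_mul]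
  ext i j
  simp only [Matrix.SpecialLinearGroup.coe_mul]
  simp only [Ssl, M]
  fin_cases i <;> fin_cases j <;>
    simp [Matrix.mul_apply, Fin.sum_univ_succ]

lemma exists_trans (a c : ℤ) (hc : 0 < c) : ∃ n : ℤ, |2*(a + n*c) + 3| ≤ c := by
  set q := (2*a+3) / (2*c) with hq
  set r := (2*a+3) % (2*c) with hr
  have h2c : (0:ℤ) < 2*c := by linarith
  have hdm : 2*c*q + r = 2*a+3 := Int.mul_ediv_add_emod _ _
  have hr0 : 0 ≤ r := Int.emod_nonneg _ (by positivity)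
  have hr1 : r < 2*c := Int.emod_lt_of_pos _ h2c
  rcases le_or_gt r c with h | h
  · exact ⟨-q, by rw [abs_le]; constructor <;> nlinarith⟩
  · exact ⟨-(q+1), by rw [abs_le]; constructor <;> nlinarith⟩

lemma exists_trans' (a c : ℤ) (hc : c ≠ 0) : ∃ n : ℤ, |2*(a + n*c) + 3| ≤ |c| := by
  rcases hc.lt_or_gt with h | h
  · obtain ⟨n, hn⟩ := exists_trans a (-c) (by linarith)
    exact ⟨-n, by rw [abs_of_neg h]; convert hn using 3; ring⟩
  · obtain ⟨n, hn⟩ := exists_trans a c h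
    exact ⟨n, by rwa [abs_of_pos h]⟩

lemma c_ne_zero (a b c : ℤ) (h : b * c = -(a^2 + 3*a + 1)) : c ≠ 0 := by
  intro hc0
  subst hc0
  have hx : (2*a+3)^2 = 5 := by linear_combination 4*h
  have h1 : 2*a+3 ≤ 2 := by nlinarith [sq_nonneg (2*a+3-3)]
  have h2 : -2 ≤ 2*a+3 := by nlinarith [sq_nonneg (2*a+3+3)]
  nlinarith

lemma base_case (a b c : ℤ) (h : b * c = -(a^2 + 3*a + 1))
    (h1 : -2 ≤ 2*a + 3) (h2 : 2*a + 3 ≤ 2) : Conj (M a b c h) := by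
  have ha : a = -1 ∨ a = -2 := by omega
  rcases ha with ha | ha <;> subst ha <;>
    [(have hbc : b * c = 1 := by linear_combination h);
     (have hbc : b * c = 1 := by linear_combination h)] <;>
    rcases Int.eq_one_or_neg_one_of_mul_eq_one' hbc with ⟨hb1, hc1⟩ | ⟨hb1, hc1⟩ <;>
    subst hb1 <;> subst hc1
  · exact conj_of_matrix _ ⟨!![-1,-1;2,1], by norm_num [Matrix.det_fin_two_of]⟩
      (by norm_num [M, Gsl, Matrix.mul_fin_two])
  · exact conj_of_matrix _ ⟨!![-2,-3;-1,-2], by norm_num [Matrix.det_fin_two_of]⟩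
      (by norm_num [M, Gsl, Matrix.mul_fin_two])
  · exact conj_of_matrix _ ⟨!![-3,2;-2,1], by norm_num [Matrix.det_fin_two_of]⟩
      (by norm_num [M, Gsl, Matrix.mul_fin_two])
  · exact conj_of_matrix _ ⟨!![-2,-1;-1,-1], by norm_num [Matrix.det_fin_two_of]⟩
      (by norm_num [M, Gsl, Matrix.mul_fin_two])

theorem main_lemma : ∀ N : ℕ, ∀ a b c : ℤ, ∀ h : b * c = -(a^2 + 3*a + 1),
    c.natAbs ≤ N → Conj (M a b c h) := by
  intro N
  induction N with
  | zero =>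
    intro a b c h hcN
    exact absurd (Int.natAbs_eq_zero.mp (Nat.le_zero.mp hcN)) (c_ne_zero a b c h)
  | succ N ih =>
    intro a b c h hcN
    obtain ⟨n, hn⟩ := exists_trans' a c (c_ne_zero a b c h)
    apply conj_of_conj_mul _ (Tn n)
    rw [Tconj]
    rcases le_or_gt |c| 2 with hle | hgt
    · have h12 := abs_le.mp (hn.trans hle)
      exact base_case _ _ _ _ (by linarith [h12.1]) (by linarith [h12.2])
    · have h' := hT n a b c h
      set a' := a + n*c with ha'
      set b' := b + n*(-3-2*a) - n^2*c with hb'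
      have h12 := abs_le.mp hn
      have key : 4*(b'*c) = 5 - (2*a'+3)^2 := by linear_combination 4*h'
      have hsq : (2*a'+3)^2 ≤ c^2 :=
        calc (2*a'+3)^2 ≤ |c|^2 := sq_le_sq' h12.1 h12.2
          _ = c^2 := sq_abs c
      have h3 : 3 ≤ |c| := by
        have := Int.add_one_le_of_lt hgt; linarith
      have hc2 : 9 ≤ c^2 := by nlinarith [sq_abs c]
      have hbb : 4 * |b'| * |c| ≤ c^2 := by
        calc 4 * |b'| * |c| = |4*(b'*c)| := by
              rw [abs_mul, abs_mul]; simp [abs_of_nonneg, mul_assoc]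
          _ ≤ c^2 := by rw [abs_le]; constructor <;> nlinarith
      have h4b : 4 * |b'| ≤ |c| :=
        le_of_mul_le_mul_right (by nlinarith [sq_abs c]) (by linarith : (0:ℤ) < |c|)
      have hblt : |b'| < |c| := by
        rcases lt_or_ge |b'| |c| with h | h
        · exact h
        · exfalso; linarith [abs_nonneg b']
      have hnat : b'.natAbs < c.natAbs := by
        rw [Int.abs_eq_natAbs, Int.abs_eq_natAbs] at hblt; exact_mod_cast hblt
      apply conj_of_conj_mul _ Ssl
      rw [Sconj]
      exact ih _ _ _ _ (by rw [Int.natAbs_neg]; omega)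

theorem stmt_7 (A : Matrix.SpecialLinearGroup (Fin 2) ℤ)
    (htr : (A : Matrix (Fin 2) (Fin 2) ℤ).trace = -3) :
    ∃ P : Matrix.SpecialLinearGroup (Fin 2) ℤ,
      ((P * A * P⁻¹ : Matrix.SpecialLinearGroup (Fin 2) ℤ) : Matrix (Fin 2) (Fin 2) ℤ)
        = !![-2, -1; -1, -1] := by
  set a := A.val 0 0 with ha
  set b := A.val 0 1 with hb
  set c := A.val 1 0 with hc
  have htr2 : a + A.val 1 1 = -3 := by
    rw [Matrix.trace_fin_two] at htr; exact htr
  have hd : A.val 1 1 = -3 - a := by linarith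
  have hdet : a * A.val 1 1 - b * c = 1 := by
    have h2 := A.2; rw [Matrix.det_fin_two] at h2; exact h2
  have h : b * c = -(a^2 + 3*a + 1) := by linear_combination -hdet + a*hd
  have hA : A = M a b c h := by
    apply Subtype.ext
    show A.val = !![a, b; c, -3 - a]
    rw [Matrix.eta_fin_two A.val, hd]
  rw [hA]
  obtain ⟨P, hP⟩ := main_lemma c.natAbs a b c h le_rfl
  exact ⟨P, by rw [hP]; rfl⟩
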